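/- Let X₁ be a real n₁×k matrix and X₀ a real n₀×k matrix such that Γ₁ := X₁ᵀX₁ and Γ₀ := X₀ᵀX₀ are positive definite; set Γ = Γ₀ + Γ₁ and let R be the positive semidefinite square root of Γ. Then, with ‖·‖ the ℓ²→ℓ² operator norm on matrices, ‖X₁·Γ₁⁻¹·Γ·Γ₀⁻¹·X₀ᵀ‖ ≤ √( ‖R·Γ₀⁻¹·R‖ · ‖R·Γ₁⁻¹·R‖ ). -/

import Mathlib

open Matrix

/-- The `ℓ² → ℓ²` operator norm of a real rectangular matrix. -/
noncomputable def l2OpNorm {m n : ℕ} (A : Matrix (Fin m) (Fin n) ℝ) : ℝ :=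
  ‖LinearMap.toContinuousLinearMap (Matrix.toEuclideanLin A)‖

open scoped Matrix.Norms.L2Operator
open scoped MatrixOrder

lemma l2OpNorm_eq {m n : ℕ} (A : Matrix (Fin m) (Fin n) ℝ) : l2OpNorm A = ‖A‖ := rfl

/-- Operator-norm inequality used to bound the remainder term `I₉` in the
proof of Theorem 4.2: with `Γ₁ = X₁ᵀX₁`, `Γ₀ = X₀ᵀX₀` positive definite,
`Γ = Γ₀ + Γ₁`, and `R` the PSD square root of `Γ`,
`‖X₁ Γ₁⁻¹ Γ Γ₀⁻¹ X₀ᵀ‖ ≤ √(‖R Γ₀⁻¹ R‖ · ‖R Γ₁⁻¹ R‖)`. -/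
theorem stmt13 {n₀ n₁ k : ℕ} (X₁ : Matrix (Fin n₁) (Fin k) ℝ) (X₀ : Matrix (Fin n₀) (Fin k) ℝ)
    (h1 : (X₁ᵀ * X₁).PosDef) (h0 : (X₀ᵀ * X₀).PosDef)
    (R : Matrix (Fin k) (Fin k) ℝ) (hR : R.PosSemidef)
    (hRR : R * R = X₀ᵀ * X₀ + X₁ᵀ * X₁) :
    l2OpNorm (X₁ * (X₁ᵀ * X₁)⁻¹ * (X₀ᵀ * X₀ + X₁ᵀ * X₁) * (X₀ᵀ * X₀)⁻¹ * X₀ᵀ) ≤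
      Real.sqrt (l2OpNorm (R * (X₀ᵀ * X₀)⁻¹ * R) * l2OpNorm (R * (X₁ᵀ * X₁)⁻¹ * R)) := by
  simp only [l2OpNorm_eq]
  set Γ₀ := X₀ᵀ * X₀ with hΓ₀
  set Γ₁ := X₁ᵀ * X₁ with hΓ₁
  -- basic invertibility facts
  have hd0 : IsUnit Γ₀.det := isUnit_iff_ne_zero.mpr h0.det_pos.ne'
  have hd1 : IsUnit Γ₁.det := isUnit_iff_ne_zero.mpr h1.det_pos.ne'
  -- real conjTranspose = transpose
  have ct : ∀ {a b : ℕ} (A : Matrix (Fin a) (Fin b) ℝ), Aᴴ = Aᵀ := fun A => by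
    ext i j; simp [Matrix.conjTranspose_apply]
  -- symmetry of the inverses
  have hG0t : Γ₀ᵀ = Γ₀ := by
    rw [hΓ₀, Matrix.transpose_mul, Matrix.transpose_transpose]
  have hG1t : Γ₁ᵀ = Γ₁ := by
    rw [hΓ₁, Matrix.transpose_mul, Matrix.transpose_transpose]
  have hs0 : Γ₀⁻¹ᵀ = Γ₀⁻¹ := by rw [Matrix.transpose_nonsing_inv, hG0t]
  have hs1 : Γ₁⁻¹ᵀ = Γ₁⁻¹ := by rw [Matrix.transpose_nonsing_inv, hG1t]
  have hRt : Rᵀ = R := by rw [← ct R]; exact hR.1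
  -- the PSD middle matrix and its square root
  have hmid : (R * Γ₀⁻¹ * R).PosSemidef := by
    have := (h0.inv.posSemidef).conjTranspose_mul_mul_same R
    rwa [ct R, hRt] at this
  set S := CFC.sqrt (R * Γ₀⁻¹ * R) with hSdef
  have hSS : S * S = R * Γ₀⁻¹ * R := CFC.sqrt_mul_sqrt_self _ hmid.nonneg
  have hSt : Sᵀ = S := by rw [← ct S]; exact (CFC.sqrt_nonneg _).posSemidef.1
  set M := X₁ * Γ₁⁻¹ * (Γ₀ + Γ₁) * Γ₀⁻¹ * X₀ᵀ with hM
  set B := X₁ * Γ₁⁻¹ * R * S with hB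
  -- rewriting helpers (all right-multiplied by an arbitrary matrix `Z`)
  have hX0 : ∀ {p : ℕ} (Z : Matrix (Fin k) (Fin p) ℝ), X₀ᵀ * (X₀ * Z) = Γ₀ * Z := fun Z => by
    rw [← Matrix.mul_assoc]
  have hX1 : ∀ {p : ℕ} (Z : Matrix (Fin k) (Fin p) ℝ), X₁ᵀ * (X₁ * Z) = Γ₁ * Z := fun Z => by
    rw [← Matrix.mul_assoc]
  have hc0 : ∀ {p : ℕ} (Z : Matrix (Fin k) (Fin p) ℝ), Γ₀⁻¹ * (Γ₀ * Z) = Z := fun Z => by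
    rw [← Matrix.mul_assoc, Matrix.nonsing_inv_mul _ hd0, Matrix.one_mul]
  have hc1 : ∀ {p : ℕ} (Z : Matrix (Fin k) (Fin p) ℝ), Γ₁⁻¹ * (Γ₁ * Z) = Z := fun Z => by
    rw [← Matrix.mul_assoc, Matrix.nonsing_inv_mul _ hd1, Matrix.one_mul]
  have hRRZ : ∀ {p : ℕ} (Z : Matrix (Fin k) (Fin p) ℝ), R * (R * Z) = (Γ₀ + Γ₁) * Z := fun Z => by
    rw [← Matrix.mul_assoc, hRR]
  have hSSZ : ∀ {p : ℕ} (Z : Matrix (Fin k) (Fin p) ℝ),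
      S * (S * Z) = R * (Γ₀⁻¹ * (R * Z)) := fun Z => by
    rw [← Matrix.mul_assoc, hSS]; simp only [Matrix.mul_assoc]
  -- M * Mᴴ = B * Bᴴ
  have key : M * Mᴴ = B * Bᴴ := by
    rw [hM, hB]
    simp only [ct, Matrix.transpose_mul, Matrix.transpose_add, Matrix.transpose_transpose, hG0t, hG1t, hs0, hs1, hSt, hRt]
    simp only [Matrix.mul_assoc, hX0, hc0, hSSZ, hRRZ]
  -- Bᴴ * B = S * (R * Γ₁⁻¹ * R) * S
  have key2 : Bᴴ * B = S * (R * Γ₁⁻¹ * R) * S := by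
    rw [hB]
    simp only [ct, Matrix.transpose_mul, Matrix.transpose_transpose, hs1, hSt, hRt]
    simp only [Matrix.mul_assoc, hX1, hc1]
  -- norms
  have hMM : ‖M‖ * ‖M‖ = ‖B‖ * ‖B‖ := by
    have e1 : ‖M‖ * ‖M‖ = ‖M * Mᴴ‖ := by
      conv_lhs => rw [← Matrix.l2_opNorm_conjTranspose M]
      rw [← Matrix.l2_opNorm_conjTranspose_mul_self Mᴴ, Matrix.conjTranspose_conjTranspose]
    have e2 : ‖B‖ * ‖B‖ = ‖B * Bᴴ‖ := by
      conv_lhs => rw [← Matrix.l2_opNorm_conjTranspose B]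
      rw [← Matrix.l2_opNorm_conjTranspose_mul_self Bᴴ, Matrix.conjTranspose_conjTranspose]
    rw [e1, e2, key]
  have hSnorm : ‖S‖ * ‖S‖ = ‖R * Γ₀⁻¹ * R‖ := by
    rw [← Matrix.l2_opNorm_conjTranspose_mul_self S, ct S, hSt, hSS]
  have hboundB : ‖B‖ * ‖B‖ ≤ ‖R * Γ₀⁻¹ * R‖ * ‖R * Γ₁⁻¹ * R‖ := by
    rw [← Matrix.l2_opNorm_conjTranspose_mul_self B, key2]
    calc ‖S * (R * Γ₁⁻¹ * R) * S‖ ≤ ‖S * (R * Γ₁⁻¹ * R)‖ * ‖S‖ := Matrix.l2_opNorm_mul _ _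
      _ ≤ ‖S‖ * ‖R * Γ₁⁻¹ * R‖ * ‖S‖ := by
          have := Matrix.l2_opNorm_mul S (R * Γ₁⁻¹ * R)
          exact mul_le_mul_of_nonneg_right this (norm_nonneg _)
      _ = ‖S‖ * ‖S‖ * ‖R * Γ₁⁻¹ * R‖ := by ring
      _ = ‖R * Γ₀⁻¹ * R‖ * ‖R * Γ₁⁻¹ * R‖ := by rw [hSnorm]
  have hfinal : ‖M‖ * ‖M‖ ≤ ‖R * Γ₀⁻¹ * R‖ * ‖R * Γ₁⁻¹ * R‖ := hMM ▸ hboundB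
  calc ‖M‖ = Real.sqrt (‖M‖ * ‖M‖) := (Real.sqrt_mul_self (norm_nonneg _)).symm
    _ ≤ Real.sqrt (‖R * Γ₀⁻¹ * R‖ * ‖R * Γ₁⁻¹ * R‖) := Real.sqrt_le_sqrt hfinal
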